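/- arXiv:2507.16622 — 2 statements merged into one kernel-verified Lean document; each statement's English description precedes it below -/
import Mathlib

section
/- Let G and H be finite connected simple graphs, each of order at least two, that are not both complete. Then mobmv(G ∨ H) = n(G) + n(H) − 1 if and only if either (mobmv(G) ≥ n(G) − 1 or mobmv(H) ≥ n(H) − 1), or (μ(G) = n(G) − 1 and μ(H) = n(H) − 1); otherwise mobmv(G ∨ H) = n(G) + n(H) − 2. -/
open SimpleGraph

variable {V : Type*} {W : Type*}

/-- `S` is a general position set of `G`: no shortest path of `G` contains more than two
vertices of `S`. -/
def IsGenPosSet (G : SimpleGraph V) (S : Set V) : Prop :=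
  ∀ ⦃u v : V⦄ (p : G.Walk u v), p.IsPath → p.length = G.dist u v →
    (S ∩ {x | x ∈ p.support}).ncard ≤ 2

/-- `S` is a mutual visibility set of `G`: any two vertices of `S` are joined by a shortest
path containing no further vertex of `S`. -/
def IsMutVisSet (G : SimpleGraph V) (S : Set V) : Prop :=
  ∀ ⦃u⦄, u ∈ S → ∀ ⦃v⦄, v ∈ S → ∃ p : G.Walk u v,
    p.IsPath ∧ p.length = G.dist u v ∧ ∀ x ∈ p.support, x ∈ S → x = u ∨ x = v

/-- A legal move (with respect to the position property `P`) of a configuration of `t` robots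
on distinct vertices: one robot moves to an adjacent unoccupied vertex, and the resulting set
of occupied vertices again satisfies `P`. -/
def LegalMove (G : SimpleGraph V) (P : Set V → Prop) {t : ℕ} (f g : Fin t ↪ V) : Prop :=
  ∃ i : Fin t, G.Adj (f i) (g i) ∧ g i ∉ Set.range ⇑f ∧ (∀ j, j ≠ i → g j = f j) ∧
    P (Set.range ⇑g)

/-- A configuration is a mobile `P`-configuration if it satisfies `P` and there is a sequence
of legal moves starting from it such that every vertex is visited by some robot. -/
def IsMobileConfig (G : SimpleGraph V) (P : Set V → Prop) {t : ℕ} (f : Fin t ↪ V) : Prop :=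
  P (Set.range ⇑f) ∧ ∃ (N : ℕ) (c : ℕ → (Fin t ↪ V)), c 0 = f ∧
    (∀ k < N, LegalMove G P (c k) (c (k + 1))) ∧ ∀ v : V, ∃ k ≤ N, ∃ i, c k i = v

/-- A configuration is completely mobile if it is mobile and moreover every robot can visit
every vertex via a sequence of legal moves. -/
def IsCompletelyMobileConfig (G : SimpleGraph V) (P : Set V → Prop) {t : ℕ}
    (f : Fin t ↪ V) : Prop :=
  IsMobileConfig G P f ∧ ∀ (v : V) (i : Fin t), ∃ (N : ℕ) (c : ℕ → (Fin t ↪ V)), c 0 = f ∧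
    (∀ k < N, LegalMove G P (c k) (c (k + 1))) ∧ ∃ k ≤ N, c k i = v

/-- The mobile general position number `mob(G)`. -/
noncomputable def mobGP (G : SimpleGraph V) : ℕ :=
  sSup {t : ℕ | ∃ f : Fin t ↪ V, IsMobileConfig G (IsGenPosSet G) f}

/-- The completely mobile general position number `mob*(G)`. -/
noncomputable def cmobGP (G : SimpleGraph V) : ℕ :=
  sSup {t : ℕ | ∃ f : Fin t ↪ V, IsCompletelyMobileConfig G (IsGenPosSet G) f}

/-- The mobile mutual visibility number `mobmv(G)`. -/
noncomputable def mobMV (G : SimpleGraph V) : ℕ :=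
  sSup {t : ℕ | ∃ f : Fin t ↪ V, IsMobileConfig G (IsMutVisSet G) f}

/-- The completely mobile mutual visibility number `mobmv*(G)`. -/
noncomputable def cmobMV (G : SimpleGraph V) : ℕ :=
  sSup {t : ℕ | ∃ f : Fin t ↪ V, IsCompletelyMobileConfig G (IsMutVisSet G) f}

/-- The mutual visibility number `μ(G)`. -/
noncomputable def muMV (G : SimpleGraph V) : ℕ :=
  sSup {n : ℕ | ∃ S : Set V, IsMutVisSet G S ∧ S.ncard = n}

/-- `μ₂(G)`: the largest cardinality of a mutual visibility set whose vertices are pairwise at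
distance at most `2`. -/
noncomputable def muMV2 (G : SimpleGraph V) : ℕ :=
  sSup {n : ℕ | ∃ S : Set V, IsMutVisSet G S ∧ (∀ u ∈ S, ∀ v ∈ S, G.dist u v ≤ 2) ∧
    S.ncard = n}

/-- The join `G ∨ H` of two graphs: the disjoint union together with all edges between the
two vertex sets. -/
def graphJoin (G : SimpleGraph V) (H : SimpleGraph W) : SimpleGraph (V ⊕ W) where
  Adj x y := match x, y with
    | Sum.inl a, Sum.inl b => G.Adj a b
    | Sum.inr a, Sum.inr b => H.Adj a b
    | Sum.inl _, Sum.inr _ => True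
    | Sum.inr _, Sum.inl _ => True
  symm := ⟨by rintro (a | a) (b | b) h <;> simp_all <;> exact h.symm⟩
  loopless := ⟨by rintro (a | a) h <;> simp_all⟩

/-- The strong product `G ⊠ H` of two graphs. -/
def strongProd (G : SimpleGraph V) (H : SimpleGraph W) : SimpleGraph (V × W) where
  Adj x y := (x.1 = y.1 ∧ H.Adj x.2 y.2) ∨ (x.2 = y.2 ∧ G.Adj x.1 y.1) ∨
    (G.Adj x.1 y.1 ∧ H.Adj x.2 y.2)
  symm := ⟨by
    rintro ⟨a, b⟩ ⟨c, d⟩ (⟨h1, h2⟩ | ⟨h1, h2⟩ | ⟨h1, h2⟩)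
    · exact Or.inl ⟨h1.symm, h2.symm⟩
    · exact Or.inr (Or.inl ⟨h1.symm, h2.symm⟩)
    · exact Or.inr (Or.inr ⟨h1.symm, h2.symm⟩)⟩
  loopless := ⟨by rintro ⟨a, b⟩ (⟨_, h⟩ | ⟨_, h⟩ | ⟨h, _⟩) <;> simp_all⟩

/-- A vertex `u` is a hub if any two distinct non-adjacent vertices different from `u` are
both adjacent to `u`. -/
def IsHub (G : SimpleGraph V) (u : V) : Prop :=
  ∀ ⦃w₁ w₂ : V⦄, w₁ ≠ u → w₂ ≠ u → w₁ ≠ w₂ → ¬G.Adj w₁ w₂ → G.Adj w₁ u ∧ G.Adj w₂ u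

/-- A block graph: every block is complete; equivalently, the vertices of any cycle form a
clique. -/
def IsBlockGraph (G : SimpleGraph V) : Prop :=
  ∀ (v : V) (c : G.Walk v v), c.IsCycle → G.IsClique {x | x ∈ c.support}

/-- The graph obtained from the complete graph `K n` (on vertices `1, ..., n`) by attaching
one pendant vertex `0`, adjacent only to vertex `1`. -/
def cliqueWithLeaf (n : ℕ) : SimpleGraph (Fin (n + 1)) :=
  SimpleGraph.fromRel (fun i j => (i ≠ 0 ∧ j ≠ 0) ∨ (i = 0 ∧ j = 1))

/-- `G` is (isomorphic to) a path graph. -/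
def IsPathGraph (G : SimpleGraph V) : Prop :=
  ∃ n : ℕ, Nonempty (G ≃g pathGraph n)

/-! ### Auxiliary lemmas -/

section Aux

open SimpleGraph Sum Walk

variable {U : Type*}

private lemma isPath_loop_eq_nil {K : SimpleGraph U} {v : U} (q : K.Walk v v)
    (hq : q.IsPath) : q = Walk.nil := by
  cases q with
  | nil => rfl
  | cons h r =>
    exfalso
    have hnd := hq.support_nodup
    rw [Walk.support_cons] at hnd
    exact (List.nodup_cons.mp hnd).1 r.end_mem_support

private lemma adj_of_secondVertex {K : SimpleGraph U} {S : Set U} {x u v : U}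
    (hSx : ∀ w, w ∉ S → w = x) {p : K.Walk u v} (hp : p.IsPath)
    (hsupp : ∀ w ∈ p.support, w ∈ S → w = u ∨ w = v)
    (hne : u ≠ v) (hna : ¬ K.Adj u v) : K.Adj u x := by
  cases p with
  | nil => exact absurd rfl hne
  | cons h q =>
    rename_i a
    by_cases haS : a ∈ S
    · rcases hsupp a (by simp) haS with h1 | h2
      · exact absurd h1.symm h.ne
      · rw [h2] at h; exact absurd h hna
    · have hax := hSx a haS
      rw [hax] at h; exact h

private lemma adj_pair_of_mv_compl {K : SimpleGraph U} {x u v : U}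
    (h : IsMutVisSet K {x}ᶜ) (hu : u ≠ x) (hv : v ≠ x) (hne : u ≠ v)
    (hna : ¬ K.Adj u v) : K.Adj u x ∧ K.Adj v x := by
  obtain ⟨p, hp, hlen, hsupp⟩ := h (show u ∈ ({x}ᶜ : Set U) from hu) (show v ∈ ({x}ᶜ : Set U) from hv)
  have hSx : ∀ w, w ∉ ({x}ᶜ : Set U) → w = x := by
    intro w hw; simpa using hw
  refine ⟨adj_of_secondVertex hSx hp hsupp hne hna, ?_⟩
  have hsupp' : ∀ w ∈ p.reverse.support, w ∈ ({x}ᶜ : Set U) → w = v ∨ w = u := by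
    intro w hw hwS
    rw [Walk.support_reverse, List.mem_reverse] at hw
    exact (hsupp w hw hwS).symm
  exact adj_of_secondVertex hSx hp.reverse hsupp' hne.symm (fun hh => hna hh.symm)

private lemma mv_of_mid {K : SimpleGraph U} (hconn : K.Connected) {S : Set U}
    (hmid : ∀ u ∈ S, ∀ v ∈ S, u ≠ v → ¬ K.Adj u v →
      ∃ m, m ∉ S ∧ K.Adj u m ∧ K.Adj m v) :
    IsMutVisSet K S := by
  intro u hu v hv
  by_cases huv : u = v
  · subst huv
    exact ⟨Walk.nil, Walk.IsPath.nil, by simp [SimpleGraph.dist_self], by simp⟩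
  by_cases hadj : K.Adj u v
  · refine ⟨Walk.cons hadj Walk.nil, ?_, ?_, ?_⟩
    · simp [Walk.cons_isPath_iff, huv]
    · simpa using (SimpleGraph.dist_eq_one_iff_adj.mpr hadj).symm
    · intro w hw _
      simpa using hw
  · obtain ⟨m, hmS, h1, h2⟩ := hmid u hu v hv huv hadj
    refine ⟨Walk.cons h1 (Walk.cons h2 Walk.nil), ?_, ?_, ?_⟩
    · simp [Walk.cons_isPath_iff, huv, h1.ne, h2.ne]
    · have hle : K.dist u v ≤ 2 := by
        simpa using SimpleGraph.dist_le (Walk.cons h1 (Walk.cons h2 Walk.nil))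
      have hpos : 0 < K.dist u v := hconn.pos_dist_of_ne huv
      have hne1 : K.dist u v ≠ 1 := fun hd => hadj (SimpleGraph.dist_eq_one_iff_adj.mp hd)
      simp only [Walk.length_cons, Walk.length_nil]
      omega
    · intro w hw hwS
      simp only [Walk.support_cons, Walk.support_nil, List.mem_cons, List.mem_singleton] at hw
      rcases hw with rfl | rfl | rfl | h'
      · exact Or.inl rfl
      · exact absurd hwS hmS
      · exact Or.inr rfl
      · simp at h'

private lemma adj_of_mv_univ {K : SimpleGraph U} (h : IsMutVisSet K Set.univ)
    {u v : U} (hne : u ≠ v) : K.Adj u v := by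
  obtain ⟨p, hp, hlen, hsupp⟩ := h (Set.mem_univ u) (Set.mem_univ v)
  cases p with
  | nil => exact absurd rfl hne
  | cons h' q =>
    rename_i a
    rcases hsupp a (by simp) (Set.mem_univ a) with h1 | h2
    · exact absurd h1.symm h'.ne
    · rw [h2] at h'; exact h'

end Aux
section Aux2

open SimpleGraph Sum

variable {U : Type*}

private lemma exists_embedding_range_eq [Fintype U] (s : Set U) :
    ∃ f : Fin s.ncard ↪ U, Set.range ⇑f = s := by
  classical
  have hc : Fintype.card s = s.ncard := by
    rw [Set.ncard_eq_toFinset_card', Set.toFinset_card]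
  refine ⟨(Fintype.equivFinOfCardEq hc).symm.toEmbedding.trans (Function.Embedding.subtype _), ?_⟩
  ext u
  simp only [Set.mem_range, Function.Embedding.trans_apply, Equiv.coe_toEmbedding,
    Function.Embedding.coe_subtype]
  constructor
  · rintro ⟨i, rfl⟩
    exact ((Fintype.equivFinOfCardEq hc).symm i).2
  · intro hu
    exact ⟨Fintype.equivFinOfCardEq hc ⟨u, hu⟩, by simp⟩

private lemma range_ncard {t : ℕ} (f : Fin t ↪ U) : (Set.range ⇑f).ncard = t := by
  rw [← Set.image_univ, Set.ncard_image_of_injective _ f.injective, Set.ncard_univ,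
    Nat.card_eq_fintype_card, Fintype.card_fin]

private lemma range_eq_compl_singleton [Fintype U] {t : ℕ} (f : Fin t ↪ U)
    (ht : t + 1 = Fintype.card U) : ∃ x, Set.range ⇑f = {x}ᶜ := by
  have h1 : (Set.range ⇑f).ncard = t := range_ncard f
  have h2 := Set.ncard_add_ncard_compl (Set.range ⇑f)
  rw [Nat.card_eq_fintype_card] at h2
  have h3 : (Set.range ⇑f)ᶜ.ncard = 1 := by omega
  obtain ⟨x, hx⟩ := Set.ncard_eq_one.mp h3
  exact ⟨x, by rw [← compl_compl (Set.range ⇑f), hx]⟩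

private lemma range_eq_univ [Fintype U] {t : ℕ} (f : Fin t ↪ U)
    (ht : t = Fintype.card U) : Set.range ⇑f = Set.univ := by
  apply Set.eq_of_subset_of_ncard_le (Set.subset_univ _)
  rw [Set.ncard_univ, Nat.card_eq_fintype_card, range_ncard f, ht]

private lemma exists_move {t : ℕ} (f : Fin t ↪ U) {a b : U} (ha : a ∈ Set.range ⇑f)
    (hb : b ∉ Set.range ⇑f) :
    ∃ (g : Fin t ↪ U) (i : Fin t), f i = a ∧ g i = b ∧ (∀ j, j ≠ i → g j = f j) ∧
      Set.range ⇑g = insert b (Set.range ⇑f \ {a}) := by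
  classical
  obtain ⟨i, hi⟩ := ha
  have hrest : ∀ j, j ≠ i → Function.Embedding.setValue f i b j = f j := by
    intro j hj
    have hfj : ¬ (f j = b) := fun h => hb ⟨j, h⟩
    simp [Function.Embedding.setValue, Function.Embedding.coeFn_mk, hj, hfj]
  refine ⟨f.setValue i b, i, hi, Function.Embedding.setValue_eq f i b, hrest, ?_⟩
  ext v
  simp only [Set.mem_range, Set.mem_insert_iff, Set.mem_diff, Set.mem_singleton_iff]
  constructor
  · rintro ⟨j, rfl⟩
    by_cases hj : j = i
    · subst hj
      exact Or.inl (Function.Embedding.setValue_eq f j b)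
    · rw [hrest j hj]
      refine Or.inr ⟨⟨j, rfl⟩, ?_⟩
      rw [← hi]
      exact fun h => hj (f.injective h)
  · rintro (hv | ⟨⟨j, rfl⟩, hne⟩)
    · exact ⟨i, by rw [Function.Embedding.setValue_eq f i b, hv]⟩
    · have hj : j ≠ i := fun h => hne (by rw [h, hi])
      exact ⟨j, hrest j hj⟩

private lemma move_compl_single [Fintype U] {t : ℕ} (f : Fin t ↪ U) {x x' : U}
    (hx : Set.range ⇑f = {x}ᶜ) (hne : x' ≠ x) :
    ∃ (g : Fin t ↪ U) (i : Fin t), f i = x' ∧ g i = x ∧ (∀ j, j ≠ i → g j = f j) ∧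
      Set.range ⇑g = {x'}ᶜ := by
  obtain ⟨g, i, h1, h2, h3, h4⟩ := exists_move f (a := x') (b := x)
    (by rw [hx]; simpa using hne) (by rw [hx]; simp)
  refine ⟨g, i, h1, h2, h3, ?_⟩
  rw [h4, hx]
  ext v
  simp only [Set.mem_insert_iff, Set.mem_diff, Set.mem_compl_iff, Set.mem_singleton_iff]
  by_cases hv : v = x <;> by_cases hv' : v = x' <;> simp_all

private lemma move_compl_pair {t : ℕ} (f : Fin t ↪ U) {p q a : U}
    (h : Set.range ⇑f = {p, q}ᶜ) (hap : a ≠ p) (haq : a ≠ q) (hpq : p ≠ q) :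
    ∃ (g : Fin t ↪ U) (i : Fin t), f i = a ∧ g i = p ∧ (∀ j, j ≠ i → g j = f j) ∧
      Set.range ⇑g = {a, q}ᶜ := by
  obtain ⟨g, i, h1, h2, h3, h4⟩ := exists_move f (a := a) (b := p)
    (by rw [h]; simp [hap, haq]) (by rw [h]; simp)
  refine ⟨g, i, h1, h2, h3, ?_⟩
  rw [h4, h]
  ext v
  simp only [Set.mem_insert_iff, Set.mem_diff, Set.mem_compl_iff, Set.mem_singleton_iff,
    not_or]
  constructor
  · rintro (rfl | ⟨⟨hvp, hvq⟩, hva⟩)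
    · exact ⟨fun hh => hap hh.symm, hpq⟩
    · exact ⟨hva, hvq⟩
  · rintro ⟨hva, hvq⟩
    by_cases hvp : v = p
    · exact Or.inl hvp
    · exact Or.inr ⟨⟨hvp, hvq⟩, hva⟩

end Aux2
section Aux3

open SimpleGraph Sum

variable {U : Type*}

private lemma mobMV_eq_sSup (K : SimpleGraph U) :
    mobMV K = sSup {t : ℕ | ∃ f : Fin t ↪ U, IsMobileConfig K (IsMutVisSet K) f} := rfl

private lemma mobset_bddAbove [Fintype U] (K : SimpleGraph U) :
    BddAbove {t : ℕ | ∃ f : Fin t ↪ U, IsMobileConfig K (IsMutVisSet K) f} := by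
  refine ⟨Fintype.card U, fun t ht => ?_⟩
  obtain ⟨f, _⟩ := ht
  simpa using Fintype.card_le_of_embedding f

/-- From adjacent vertices `x' ~ x` whose singleton-complements are both mutual visibility
sets, build a mobile configuration with `card U - 1` robots. -/
private lemma mem_mobset_of_adj_mv_compls [Fintype U] {K : SimpleGraph U} {x x' : U}
    (hadj : K.Adj x' x) (hmv : IsMutVisSet K {x}ᶜ) (hmv' : IsMutVisSet K {x'}ᶜ) :
    ∃ f : Fin (Fintype.card U - 1) ↪ U, IsMobileConfig K (IsMutVisSet K) f := by
  have hn : ({x}ᶜ : Set U).ncard = Fintype.card U - 1 := by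
    have h2 := Set.ncard_add_ncard_compl ({x} : Set U)
    rw [Nat.card_eq_fintype_card, Set.ncard_singleton] at h2
    omega
  obtain ⟨f, hf⟩ := hn ▸ exists_embedding_range_eq ({x}ᶜ : Set U)
  obtain ⟨g, i, hfi, hgi, hgj, hg⟩ := move_compl_single f hf hadj.ne
  refine ⟨f, ?_, 1, fun k => if k = 0 then f else g, by simp, ?_, ?_⟩
  · rw [hf]; exact hmv
  · intro k hk
    have hk0 : k = 0 := by omega
    subst hk0
    refine show LegalMove K (IsMutVisSet K) f g from ⟨i, ?_, ?_, hgj, ?_⟩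
    · rw [hfi, hgi]; exact hadj
    · rw [hgi, hf]; simp
    · rw [hg]; exact hmv'
  · intro v
    by_cases hv : v = x
    · exact ⟨1, le_refl 1, i, by simp [hgi, hv]⟩
    · have hvr : v ∈ Set.range ⇑f := by rw [hf]; simpa using hv
      obtain ⟨j, hj⟩ := hvr
      exact ⟨0, Nat.zero_le 1, j, by simpa using hj⟩

private lemma mem_mobset_full [Fintype U] {K : SimpleGraph U}
    (hK : ∀ u v : U, u ≠ v → K.Adj u v) :
    ∃ f : Fin (Fintype.card U) ↪ U, IsMobileConfig K (IsMutVisSet K) f := by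
  have hn : (Set.univ : Set U).ncard = Fintype.card U := by
    rw [Set.ncard_univ, Nat.card_eq_fintype_card]
  obtain ⟨f, hf⟩ := hn ▸ exists_embedding_range_eq (Set.univ : Set U)
  have hmv : IsMutVisSet K Set.univ := by
    intro u _ v _
    by_cases huv : u = v
    · subst huv
      exact ⟨SimpleGraph.Walk.nil, SimpleGraph.Walk.IsPath.nil, by simp [SimpleGraph.dist_self],
        by simp⟩
    · refine ⟨SimpleGraph.Walk.cons (hK u v huv) SimpleGraph.Walk.nil, ?_, ?_, ?_⟩
      · simp [SimpleGraph.Walk.cons_isPath_iff, huv]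
      · simpa using (SimpleGraph.dist_eq_one_iff_adj.mpr (hK u v huv)).symm
      · intro w hw _; simpa using hw
  refine ⟨f, by rw [hf]; exact hmv, 0, fun _ => f, rfl, by omega, ?_⟩
  intro v
  have hvr : v ∈ Set.range ⇑f := by rw [hf]; trivial
  obtain ⟨j, hj⟩ := hvr
  exact ⟨0, le_refl 0, j, hj⟩

/-- From a mobile configuration with `card U - 1` robots, extract two adjacent vertices whose
singleton-complements are mutual visibility sets. -/
private lemma adj_mv_compls_of_mobile [Fintype U] {K : SimpleGraph U} {t : ℕ}
    (f : Fin t ↪ U) (hmob : IsMobileConfig K (IsMutVisSet K) f)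
    (ht : t + 1 = Fintype.card U) :
    ∃ x x', x ≠ x' ∧ K.Adj x x' ∧ IsMutVisSet K {x}ᶜ ∧ IsMutVisSet K {x'}ᶜ := by
  obtain ⟨x, hx⟩ := range_eq_compl_singleton f ht
  obtain ⟨hmv0, N, c, hc0, hmoves, hvisit⟩ := hmob
  obtain ⟨k, hkN, i, hki⟩ := hvisit x
  have hk0 : k ≠ 0 := by
    intro hh
    subst hh
    rw [hc0] at hki
    have hxr : x ∈ Set.range ⇑f := ⟨i, hki⟩
    rw [hx] at hxr
    simp at hxr
  have hmove := hmoves 0 (by omega)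
  rw [hc0] at hmove
  obtain ⟨j, hadj, hnotin, hrest, hmv1⟩ := hmove
  have hj : c 1 j = x := by
    rw [hx] at hnotin
    simpa using hnotin
  have hfjx : f j ≠ x := by
    intro hh
    have : f j ∈ Set.range ⇑f := ⟨j, rfl⟩
    rw [hx, hh] at this
    simp at this
  have hrange1 : Set.range ⇑(c 1) = {f j}ᶜ := by
    ext v
    simp only [Set.mem_range, Set.mem_compl_iff, Set.mem_singleton_iff]
    constructor
    · rintro ⟨l, hl⟩ hv
      by_cases hlj : l = j
      · subst hlj
        rw [hj] at hl
        exact hfjx (hv ▸ hl.symm ▸ rfl)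
      · rw [hrest l hlj] at hl
        exact hlj (f.injective (by rw [hl, hv]))
    · intro hv
      by_cases hvx : v = x
      · exact ⟨j, by rw [hj, hvx]⟩
      · have hvr : v ∈ Set.range ⇑f := by rw [hx]; simpa using hvx
        obtain ⟨l, hl⟩ := hvr
        have hlj : l ≠ j := fun hh => hv (by rw [← hl, hh])
        exact ⟨l, by rw [hrest l hlj, hl]⟩
  refine ⟨x, f j, fun hh => hfjx hh.symm, ?_, by rw [← hx]; exact hmv0, by rw [← hrange1]; exact hmv1⟩
  have := hadj
  rw [hj] at this
  exact this.symm

private lemma complete_of_mobile_full [Fintype U] {K : SimpleGraph U} {t : ℕ}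
    (f : Fin t ↪ U) (hmob : IsMobileConfig K (IsMutVisSet K) f)
    (ht : t = Fintype.card U) : ∀ u v : U, u ≠ v → K.Adj u v := by
  have hr := range_eq_univ f ht
  have hmv := hmob.1
  rw [hr] at hmv
  exact fun u v huv => adj_of_mv_univ hmv huv

end Aux3
section Aux4

open SimpleGraph Sum

variable {V : Type*} {W : Type*} {G : SimpleGraph V} {H : SimpleGraph W}

private lemma join_adj_inl_inl {a b : V} :
    (graphJoin G H).Adj (inl a) (inl b) ↔ G.Adj a b := Iff.rfl

private lemma join_adj_inr_inr {a b : W} :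
    (graphJoin G H).Adj (inr a) (inr b) ↔ H.Adj a b := Iff.rfl

private lemma join_adj_inl_inr {a : V} {b : W} :
    (graphJoin G H).Adj (inl a) (inr b) := trivial

private lemma join_adj_inr_inl {a : W} {b : V} :
    (graphJoin G H).Adj (inr a) (inl b) := trivial

private lemma join_connected [Nonempty V] [Nonempty W] :
    (graphJoin G H).Connected := by
  rw [SimpleGraph.connected_iff]
  refine ⟨?_, by infer_instance⟩
  intro x y
  obtain ⟨w⟩ := (inferInstance : Nonempty W)
  obtain ⟨a⟩ := (inferInstance : Nonempty V)
  cases x with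
  | inl xa =>
    cases y with
    | inl ya =>
      exact ⟨SimpleGraph.Walk.cons (join_adj_inl_inr (b := w))
        (SimpleGraph.Walk.cons join_adj_inr_inl SimpleGraph.Walk.nil)⟩
    | inr yb => exact ⟨SimpleGraph.Walk.cons join_adj_inl_inr SimpleGraph.Walk.nil⟩
  | inr xb =>
    cases y with
    | inl ya => exact ⟨SimpleGraph.Walk.cons join_adj_inr_inl SimpleGraph.Walk.nil⟩
    | inr yb =>
      exact ⟨SimpleGraph.Walk.cons (join_adj_inr_inl (b := a))
        (SimpleGraph.Walk.cons join_adj_inl_inr SimpleGraph.Walk.nil)⟩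

private lemma hubG_of_mv_compl_inl {x : V}
    (h : IsMutVisSet (graphJoin G H) {(inl x : V ⊕ W)}ᶜ) : IsHub G x := by
  intro w₁ w₂ h1 h2 h3 h4
  have h4' : ¬ (graphJoin G H).Adj (inl w₁) (inl w₂) := fun hh => h4 (join_adj_inl_inl.mp hh)
  have := adj_pair_of_mv_compl h (by simpa using h1) (by simpa using h2)
    (by simpa using h3) h4'
  exact ⟨join_adj_inl_inl.mp this.1, join_adj_inl_inl.mp this.2⟩

private lemma hubH_of_mv_compl_inr {y : W}
    (h : IsMutVisSet (graphJoin G H) {(inr y : V ⊕ W)}ᶜ) : IsHub H y := by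
  intro w₁ w₂ h1 h2 h3 h4
  have h4' : ¬ (graphJoin G H).Adj (inr w₁) (inr w₂) := fun hh => h4 (join_adj_inr_inr.mp hh)
  have := adj_pair_of_mv_compl h (by simpa using h1) (by simpa using h2)
    (by simpa using h3) h4'
  exact ⟨join_adj_inr_inr.mp this.1, join_adj_inr_inr.mp this.2⟩

private lemma mv_join_compl_inl [Nonempty V] [Nonempty W] {x : V} (hx : IsHub G x) :
    IsMutVisSet (graphJoin G H) {(inl x : V ⊕ W)}ᶜ := by
  apply mv_of_mid join_connected
  rintro (a | a) ha (b | b) hb hne hna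
  · have hna' : ¬ G.Adj a b := fun hh => hna (join_adj_inl_inl.mpr hh)
    have hane : a ≠ b := by simpa using hne
    have hax : a ≠ x := by simpa using ha
    have hbx : b ≠ x := by simpa using hb
    obtain ⟨ha1, ha2⟩ := hx hax hbx hane hna'
    exact ⟨inl x, by simp, join_adj_inl_inl.mpr ha1, join_adj_inl_inl.mpr ha2.symm⟩
  · exact absurd join_adj_inl_inr hna
  · exact absurd join_adj_inr_inl hna
  · exact ⟨inl x, by simp, join_adj_inr_inl, join_adj_inl_inr⟩

private lemma mv_join_compl_inr [Nonempty V] [Nonempty W] {y : W} (hy : IsHub H y) :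
    IsMutVisSet (graphJoin G H) {(inr y : V ⊕ W)}ᶜ := by
  apply mv_of_mid join_connected
  rintro (a | a) ha (b | b) hb hne hna
  · exact ⟨inr y, by simp, join_adj_inl_inr, join_adj_inr_inl⟩
  · exact absurd join_adj_inl_inr hna
  · exact absurd join_adj_inr_inl hna
  · have hna' : ¬ H.Adj a b := fun hh => hna (join_adj_inr_inr.mpr hh)
    have hane : a ≠ b := by simpa using hne
    have hay : a ≠ y := by simpa using ha
    have hby : b ≠ y := by simpa using hb
    obtain ⟨ha1, ha2⟩ := hy hay hby hane hna'
    exact ⟨inr y, by simp, join_adj_inr_inr.mpr ha1, join_adj_inr_inr.mpr ha2.symm⟩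

private lemma mv_join_compl_pair [Nonempty V] [Nonempty W] (x : V) (y : W) :
    IsMutVisSet (graphJoin G H) {(inl x : V ⊕ W), inr y}ᶜ := by
  apply mv_of_mid join_connected
  rintro (a | a) ha (b | b) hb hne hna
  · exact ⟨inr y, by simp, join_adj_inl_inr, join_adj_inr_inl⟩
  · exact absurd join_adj_inl_inr hna
  · exact absurd join_adj_inr_inl hna
  · exact ⟨inl x, by simp, join_adj_inr_inl, join_adj_inl_inr⟩

private lemma hub_top {U : Type*} {K : SimpleGraph U} (hK : K = ⊤) (u : U) : IsHub K u := by
  intro w₁ w₂ h1 h2 h3 h4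
  subst hK
  exact absurd ((SimpleGraph.top_adj _ _).mpr h3) h4

private lemma eq_top_of_forall_adj {U : Type*} {K : SimpleGraph U}
    (h : ∀ u v : U, u ≠ v → K.Adj u v) : K = ⊤ := by
  ext u v
  simp only [SimpleGraph.top_adj]
  exact ⟨fun hh => hh.ne, fun hh => h u v hh⟩

end Aux4
section Aux5

open SimpleGraph Sum

variable {U : Type*}

private lemma hub_of_mv_compl {K : SimpleGraph U} {x : U} (h : IsMutVisSet K {x}ᶜ) :
    IsHub K x :=
  fun _ _ h1 h2 h3 h4 => adj_pair_of_mv_compl h h1 h2 h3 h4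

private lemma mv_compl_of_hub {K : SimpleGraph U} (hK : K.Connected) {x : U}
    (hx : IsHub K x) : IsMutVisSet K {x}ᶜ := by
  apply mv_of_mid hK
  intro u hu v hv hne hna
  obtain ⟨h1, h2⟩ := hx (by simpa using hu) (by simpa using hv) hne hna
  exact ⟨x, by simp, h1, h2.symm⟩

private lemma mv_univ_of_complete {K : SimpleGraph U}
    (hK : ∀ u v : U, u ≠ v → K.Adj u v) : IsMutVisSet K Set.univ := by
  intro u _ v _
  by_cases huv : u = v
  · subst huv
    exact ⟨SimpleGraph.Walk.nil, SimpleGraph.Walk.IsPath.nil, by simp [SimpleGraph.dist_self],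
      by simp⟩
  · refine ⟨SimpleGraph.Walk.cons (hK u v huv) SimpleGraph.Walk.nil, ?_, ?_, ?_⟩
    · simp [SimpleGraph.Walk.cons_isPath_iff, huv]
    · simpa using (SimpleGraph.dist_eq_one_iff_adj.mpr (hK u v huv)).symm
    · intro w hw _; simpa using hw

private lemma ncard_compl_singleton [Fintype U] (x : U) :
    ({x}ᶜ : Set U).ncard = Fintype.card U - 1 := by
  have h2 := Set.ncard_add_ncard_compl ({x} : Set U)
  rw [Nat.card_eq_fintype_card, Set.ncard_singleton] at h2
  omega

private lemma exists_adj {K : SimpleGraph U} [Fintype U] (hK : K.Connected)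
    (hU : 2 ≤ Fintype.card U) : ∃ u v : U, K.Adj u v := by
  obtain ⟨u, v, huv⟩ := Fintype.exists_pair_of_one_lt_card (α := U) (by omega)
  obtain ⟨p⟩ := hK.preconnected u v
  cases p with
  | nil => exact absurd rfl huv
  | cons h q => exact ⟨_, _, h⟩

/-- Characterization of `card U - 1 ≤ mobMV K`. -/
private lemma mobMV_ge_iff [Fintype U] {K : SimpleGraph U} (hK : K.Connected)
    (hU : 2 ≤ Fintype.card U) :
    Fintype.card U - 1 ≤ mobMV K ↔
      (K = ⊤ ∨ ∃ x x' : U, x ≠ x' ∧ K.Adj x x' ∧ IsHub K x ∧ IsHub K x') := by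
  constructor
  · intro hge
    have hpos : 1 ≤ mobMV K := le_trans (by omega) hge
    have hne : {t : ℕ | ∃ f : Fin t ↪ U, IsMobileConfig K (IsMutVisSet K) f}.Nonempty := by
      by_contra hc
      rw [Set.not_nonempty_iff_eq_empty] at hc
      rw [mobMV_eq_sSup, hc] at hpos
      simp at hpos
    have hmem := Nat.sSup_mem hne (mobset_bddAbove K)
    rw [← mobMV_eq_sSup] at hmem
    obtain ⟨f, hf⟩ := hmem
    have hle : mobMV K ≤ Fintype.card U := by simpa using Fintype.card_le_of_embedding f
    rcases (by omega : mobMV K = Fintype.card U ∨ mobMV K + 1 = Fintype.card U) with h | h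
    · exact Or.inl (eq_top_of_forall_adj (complete_of_mobile_full f hf h))
    · obtain ⟨x, x', hne', hadj, hmv, hmv'⟩ := adj_mv_compls_of_mobile f hf h
      exact Or.inr ⟨x, x', hne', hadj, hub_of_mv_compl hmv, hub_of_mv_compl hmv'⟩
  · rintro (h | ⟨x, x', hne', hadj, hx, hx'⟩)
    · obtain ⟨f, hf⟩ := mem_mobset_full (fun u v huv => h ▸ ((SimpleGraph.top_adj u v).mpr huv))
      calc Fintype.card U - 1 ≤ Fintype.card U := by omega
        _ ≤ mobMV K := le_csSup (mobset_bddAbove K) ⟨f, hf⟩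
    · obtain ⟨f, hf⟩ := mem_mobset_of_adj_mv_compls hadj
        (mv_compl_of_hub hK hx') (mv_compl_of_hub hK hx)
      exact le_csSup (mobset_bddAbove K) ⟨f, hf⟩

/-- Characterization of `muMV K = card U - 1`. -/
private lemma muMV_eq_iff [Fintype U] {K : SimpleGraph U} (hK : K.Connected)
    (hU : 2 ≤ Fintype.card U) :
    muMV K = Fintype.card U - 1 ↔ (K ≠ ⊤ ∧ ∃ x, IsHub K x) := by
  have hbdd : BddAbove {n : ℕ | ∃ S : Set U, IsMutVisSet K S ∧ S.ncard = n} := by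
    refine ⟨Fintype.card U, fun m hm => ?_⟩
    obtain ⟨S, _, rfl⟩ := hm
    calc S.ncard ≤ (Set.univ : Set U).ncard :=
          Set.ncard_le_ncard (Set.subset_univ S) Set.finite_univ
      _ = Fintype.card U := by rw [Set.ncard_univ, Nat.card_eq_fintype_card]
  have hnon : {n : ℕ | ∃ S : Set U, IsMutVisSet K S ∧ S.ncard = n}.Nonempty :=
    ⟨0, ∅, fun u hu => absurd hu (Set.notMem_empty u), Set.ncard_empty U⟩
  constructor
  · intro hmu
    have hmem := Nat.sSup_mem hnon hbdd
    rw [show sSup {n : ℕ | ∃ S : Set U, IsMutVisSet K S ∧ S.ncard = n} = muMV K from rfl,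
      hmu] at hmem
    obtain ⟨S, hS, hcard⟩ := hmem
    have h2 := Set.ncard_add_ncard_compl S
    rw [Nat.card_eq_fintype_card] at h2
    have h3 : Sᶜ.ncard = 1 := by omega
    obtain ⟨x, hx⟩ := Set.ncard_eq_one.mp h3
    have hSx : S = {x}ᶜ := by rw [← compl_compl S, hx]
    refine ⟨?_, x, hub_of_mv_compl (hSx ▸ hS)⟩
    intro htop
    have hmvu : IsMutVisSet K Set.univ :=
      mv_univ_of_complete (fun u v huv => htop ▸ ((SimpleGraph.top_adj u v).mpr huv))
    have hge : Fintype.card U ≤ muMV K := le_csSup hbdd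
      ⟨Set.univ, hmvu, by rw [Set.ncard_univ, Nat.card_eq_fintype_card]⟩
    omega
  · rintro ⟨htop, x, hx⟩
    apply le_antisymm
    · apply csSup_le hnon
      intro m hm
      obtain ⟨S, hS, rfl⟩ := hm
      by_contra hgt
      push_neg at hgt
      have hle : S.ncard ≤ Fintype.card U := by
        calc S.ncard ≤ (Set.univ : Set U).ncard :=
              Set.ncard_le_ncard (Set.subset_univ S) Set.finite_univ
          _ = Fintype.card U := by rw [Set.ncard_univ, Nat.card_eq_fintype_card]
      have hSu : S = Set.univ := Set.eq_of_subset_of_ncard_le (Set.subset_univ S)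
        (by rw [Set.ncard_univ, Nat.card_eq_fintype_card]; omega)
      rw [hSu] at hS
      exact htop (eq_top_of_forall_adj (fun u v huv => adj_of_mv_univ hS huv))
    · exact le_csSup hbdd ⟨{x}ᶜ, mv_compl_of_hub hK hx, ncard_compl_singleton x⟩

end Aux5
section Aux6

open SimpleGraph Sum

variable {V : Type*} {W : Type*} [Fintype V] [Fintype W] {G : SimpleGraph V} {H : SimpleGraph W}

/-- A mobile configuration on the join with two "holes", one on each side. -/
private lemma two_holes_mem (hG : G.Connected) (hH : H.Connected)
    (hV : 2 ≤ Fintype.card V) (hW : 2 ≤ Fintype.card W) :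
    ∃ f : Fin (Fintype.card V + Fintype.card W - 2) ↪ V ⊕ W,
      IsMobileConfig (graphJoin G H) (IsMutVisSet (graphJoin G H)) f := by
  haveI : Nonempty V := Fintype.card_pos_iff.mp (by omega)
  haveI : Nonempty W := Fintype.card_pos_iff.mp (by omega)
  obtain ⟨x₂, x, hxa⟩ := exists_adj hG hV
  obtain ⟨y₂, y, hya⟩ := exists_adj hH hW
  have hcard : (({(inl x : V ⊕ W), inr y} : Set (V ⊕ W))ᶜ).ncard
      = Fintype.card V + Fintype.card W - 2 := by
    have h2 := Set.ncard_add_ncard_compl (({(inl x : V ⊕ W), inr y} : Set (V ⊕ W)))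
    rw [Nat.card_eq_fintype_card, Fintype.card_sum, Set.ncard_pair (by simp)] at h2
    omega
  obtain ⟨f, hf⟩ := hcard ▸ exists_embedding_range_eq (({(inl x : V ⊕ W), inr y} : Set (V ⊕ W))ᶜ)
  obtain ⟨g, i, hfi, hgi, hgj, hg⟩ := move_compl_pair f hf (a := inl x₂)
    (by simpa using hxa.ne) (by simp) (by simp)
  have hg' : Set.range ⇑g = {(inr y : V ⊕ W), inl x₂}ᶜ := by rw [hg, Set.pair_comm]
  obtain ⟨e, j, hgj2, hej, herest, he⟩ := move_compl_pair g hg' (a := inr y₂)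
    (by simpa using hya.ne) (by simp) (by simp)
  refine ⟨f, ?_, 2, fun k => if k = 0 then f else if k = 1 then g else e, by simp, ?_, ?_⟩
  · rw [hf]; exact mv_join_compl_pair x y
  · intro k hk
    interval_cases k
    · refine show LegalMove (graphJoin G H) (IsMutVisSet (graphJoin G H)) f g from
        ⟨i, ?_, ?_, hgj, ?_⟩
      · rw [hfi, hgi]; exact join_adj_inl_inl.mpr hxa
      · rw [hgi, hf]; simp
      · rw [hg]; exact mv_join_compl_pair x₂ y
    · refine show LegalMove (graphJoin G H) (IsMutVisSet (graphJoin G H)) g e from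
        ⟨j, ?_, ?_, herest, ?_⟩
      · rw [hgj2, hej]; exact join_adj_inr_inr.mpr hya
      · rw [hej, hg]; simp
      · rw [he, Set.pair_comm (inr y₂) (inl x₂)]; exact mv_join_compl_pair x₂ y₂
  · intro v
    by_cases hv1 : v = inl x
    · exact ⟨1, by omega, i, by simp [hgi, hv1]⟩
    by_cases hv2 : v = inr y
    · exact ⟨2, le_refl 2, j, by simp [hej, hv2]⟩
    have hvr : v ∈ Set.range ⇑f := by rw [hf]; simp [hv1, hv2]
    obtain ⟨l, hl⟩ := hvr
    exact ⟨0, by omega, l, by simpa using hl⟩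

/-- Any mobile configuration on the join has at most `card V + card W` robots, with equality
impossible unless both factors are complete. -/
private lemma join_mobset_lt (hnc : ¬(G = ⊤ ∧ H = ⊤)) (hV : 2 ≤ Fintype.card V)
    (hW : 2 ≤ Fintype.card W) {t : ℕ}
    (ht : ∃ f : Fin t ↪ V ⊕ W, IsMobileConfig (graphJoin G H) (IsMutVisSet (graphJoin G H)) f) :
    t ≤ Fintype.card V + Fintype.card W - 1 := by
  obtain ⟨f, hf⟩ := ht
  have hle : t ≤ Fintype.card V + Fintype.card W := by
    simpa [Fintype.card_sum] using Fintype.card_le_of_embedding f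
  rcases Nat.lt_or_ge t (Fintype.card V + Fintype.card W) with h | h
  · omega
  exfalso
  have ht' : t = Fintype.card (V ⊕ W) := by rw [Fintype.card_sum]; omega
  have hcomp := complete_of_mobile_full f hf ht'
  apply hnc
  constructor
  · apply eq_top_of_forall_adj
    intro u v huv
    exact join_adj_inl_inl.mp (hcomp (inl u) (inl v) (by simpa using huv))
  · apply eq_top_of_forall_adj
    intro u v huv
    exact join_adj_inr_inr.mp (hcomp (inr u) (inr v) (by simpa using huv))

/-- Characterization of `mobMV (G ∨ H) = n - 1` in terms of hubs. -/
private lemma join_mobMV_eq_iff (hG : G.Connected) (hH : H.Connected)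
    (hV : 2 ≤ Fintype.card V) (hW : 2 ≤ Fintype.card W) (hnc : ¬(G = ⊤ ∧ H = ⊤)) :
    mobMV (graphJoin G H) = Fintype.card V + Fintype.card W - 1 ↔
      ((∃ x x' : V, x ≠ x' ∧ G.Adj x x' ∧ IsHub G x ∧ IsHub G x') ∨
       (∃ y y' : W, y ≠ y' ∧ H.Adj y y' ∧ IsHub H y ∧ IsHub H y') ∨
       ((∃ x, IsHub G x) ∧ (∃ y, IsHub H y))) := by
  haveI : Nonempty V := Fintype.card_pos_iff.mp (by omega)
  haveI : Nonempty W := Fintype.card_pos_iff.mp (by omega)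
  have hbdd := mobset_bddAbove (graphJoin G H)
  have hnon : {t : ℕ | ∃ f : Fin t ↪ V ⊕ W,
      IsMobileConfig (graphJoin G H) (IsMutVisSet (graphJoin G H)) f}.Nonempty :=
    ⟨Fintype.card V + Fintype.card W - 2, two_holes_mem hG hH hV hW⟩
  constructor
  · intro heq
    have hmem := Nat.sSup_mem hnon hbdd
    rw [← mobMV_eq_sSup, heq] at hmem
    obtain ⟨f, hf⟩ := hmem
    have hext := adj_mv_compls_of_mobile f hf
      (by rw [Fintype.card_sum]; omega)
    obtain ⟨x, x', hne, hadj, hmv, hmv'⟩ := hext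
    cases x with
    | inl a =>
      cases x' with
      | inl b =>
        exact Or.inl ⟨a, b, by simpa using hne, join_adj_inl_inl.mp hadj,
          hubG_of_mv_compl_inl hmv, hubG_of_mv_compl_inl hmv'⟩
      | inr b =>
        exact Or.inr (Or.inr ⟨⟨a, hubG_of_mv_compl_inl hmv⟩, ⟨b, hubH_of_mv_compl_inr hmv'⟩⟩)
    | inr a =>
      cases x' with
      | inl b =>
        exact Or.inr (Or.inr ⟨⟨b, hubG_of_mv_compl_inl hmv'⟩, ⟨a, hubH_of_mv_compl_inr hmv⟩⟩)
      | inr b =>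
        exact Or.inr (Or.inl ⟨a, b, by simpa using hne, join_adj_inr_inr.mp hadj,
          hubH_of_mv_compl_inr hmv, hubH_of_mv_compl_inr hmv'⟩)
  · intro hc
    have hmem : (Fintype.card V + Fintype.card W - 1) ∈ {t : ℕ | ∃ f : Fin t ↪ V ⊕ W,
        IsMobileConfig (graphJoin G H) (IsMutVisSet (graphJoin G H)) f} := by
      have hcardeq : Fintype.card (V ⊕ W) - 1 = Fintype.card V + Fintype.card W - 1 := by
        rw [Fintype.card_sum]
      rcases hc with ⟨x, x', hne, hadj, hx, hx'⟩ | ⟨y, y', hne, hadj, hy, hy'⟩ | ⟨⟨x, hx⟩, ⟨y, hy⟩⟩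
      · exact hcardeq ▸ mem_mobset_of_adj_mv_compls
          (show (graphJoin G H).Adj (inl x) (inl x') from join_adj_inl_inl.mpr hadj)
          (mv_join_compl_inl hx') (mv_join_compl_inl hx)
      · exact hcardeq ▸ mem_mobset_of_adj_mv_compls
          (show (graphJoin G H).Adj (inr y) (inr y') from join_adj_inr_inr.mpr hadj)
          (mv_join_compl_inr hy') (mv_join_compl_inr hy)
      · exact hcardeq ▸ mem_mobset_of_adj_mv_compls
          (show (graphJoin G H).Adj (inl x) (inr y) from join_adj_inl_inr)
          (mv_join_compl_inr hy) (mv_join_compl_inl hx)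
    apply le_antisymm
    · rw [mobMV_eq_sSup]
      exact csSup_le hnon (fun t ht => join_mobset_lt hnc hV hW ht)
    · exact le_csSup hbdd hmem

end Aux6

theorem stmt_5 {V W : Type*} [Fintype V] [Fintype W] (G : SimpleGraph V)
    (H : SimpleGraph W) (hG : G.Connected) (hH : H.Connected)
    (hV : 2 ≤ Fintype.card V) (hW : 2 ≤ Fintype.card W) (hnc : ¬(G = ⊤ ∧ H = ⊤)) :
    (mobMV (graphJoin G H) = Fintype.card V + Fintype.card W - 1 ↔
      ((Fintype.card V - 1 ≤ mobMV G ∨ Fintype.card W - 1 ≤ mobMV H) ∨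
        (muMV G = Fintype.card V - 1 ∧ muMV H = Fintype.card W - 1))) ∧
    (¬((Fintype.card V - 1 ≤ mobMV G ∨ Fintype.card W - 1 ≤ mobMV H) ∨
        (muMV G = Fintype.card V - 1 ∧ muMV H = Fintype.card W - 1)) →
      mobMV (graphJoin G H) = Fintype.card V + Fintype.card W - 2) := by
  have hmain := join_mobMV_eq_iff hG hH hV hW hnc
  have hRHS : ((Fintype.card V - 1 ≤ mobMV G ∨ Fintype.card W - 1 ≤ mobMV H) ∨
        (muMV G = Fintype.card V - 1 ∧ muMV H = Fintype.card W - 1)) ↔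
      ((∃ x x' : V, x ≠ x' ∧ G.Adj x x' ∧ IsHub G x ∧ IsHub G x') ∨
       (∃ y y' : W, y ≠ y' ∧ H.Adj y y' ∧ IsHub H y ∧ IsHub H y') ∨
       ((∃ x, IsHub G x) ∧ (∃ y, IsHub H y))) := by
    rw [mobMV_ge_iff hG hV, mobMV_ge_iff hH hW, muMV_eq_iff hG hV, muMV_eq_iff hH hW]
    have topG : G = ⊤ → ∃ x x' : V, x ≠ x' ∧ G.Adj x x' ∧ IsHub G x ∧ IsHub G x' := by
      intro h
      obtain ⟨u, v, huv⟩ := Fintype.exists_pair_of_one_lt_card (α := V) (by omega)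
      exact ⟨u, v, huv, h ▸ ((SimpleGraph.top_adj u v).mpr huv), hub_top h u, hub_top h v⟩
    have topH : H = ⊤ → ∃ y y' : W, y ≠ y' ∧ H.Adj y y' ∧ IsHub H y ∧ IsHub H y' := by
      intro h
      obtain ⟨u, v, huv⟩ := Fintype.exists_pair_of_one_lt_card (α := W) (by omega)
      exact ⟨u, v, huv, h ▸ ((SimpleGraph.top_adj u v).mpr huv), hub_top h u, hub_top h v⟩
    constructor
    · rintro ((h | h) | h)
      · rcases h with h | h
        · exact Or.inl (topG h)
        · exact Or.inl h
      · rcases h with h | h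
        · exact Or.inr (Or.inl (topH h))
        · exact Or.inr (Or.inl h)
      · exact Or.inr (Or.inr ⟨h.1.2, h.2.2⟩)
    · rintro (h | h | h)
      · exact Or.inl (Or.inl (Or.inr h))
      · exact Or.inl (Or.inr (Or.inr h))
      · by_cases hg : G = ⊤
        · exact Or.inl (Or.inl (Or.inl hg))
        by_cases hh2 : H = ⊤
        · exact Or.inl (Or.inr (Or.inl hh2))
        exact Or.inr ⟨⟨hg, h.1⟩, ⟨hh2, h.2⟩⟩
  refine ⟨hmain.trans hRHS.symm, ?_⟩
  intro hnot
  have hne1 : mobMV (graphJoin G H) ≠ Fintype.card V + Fintype.card W - 1 :=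
    fun h => hnot (hRHS.mpr (hmain.mp h))
  have hbdd := mobset_bddAbove (graphJoin G H)
  have hmem2 : (Fintype.card V + Fintype.card W - 2) ∈ {t : ℕ | ∃ f : Fin t ↪ V ⊕ W,
      IsMobileConfig (graphJoin G H) (IsMutVisSet (graphJoin G H)) f} :=
    two_holes_mem hG hH hV hW
  have hnon : {t : ℕ | ∃ f : Fin t ↪ V ⊕ W,
      IsMobileConfig (graphJoin G H) (IsMutVisSet (graphJoin G H)) f}.Nonempty :=
    ⟨_, hmem2⟩
  have hmem := Nat.sSup_mem hnon hbdd
  rw [← mobMV_eq_sSup] at hmem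
  have hub2 : mobMV (graphJoin G H) ≤ Fintype.card V + Fintype.card W - 1 :=
    join_mobset_lt hnc hV hW hmem
  have hlb : Fintype.card V + Fintype.card W - 2 ≤ mobMV (graphJoin G H) := by
    rw [mobMV_eq_sSup]
    exact le_csSup hbdd hmem2
  omega
end

section
/- For any finite connected simple graph G, mobmv(G ∨ K₁) = μ₂(G) + 1. -/
open SimpleGraph

variable {V : Type*} {W : Type*}

namespace MVAux
open Sum

variable {V : Type*} {G : SimpleGraph V}

lemma walk_len2 {a b : V} (p : G.Walk a b) (h : p.length = 2) :
    ∃ c, ∃ h1 : G.Adj a c, ∃ h2 : G.Adj c b,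
      p = SimpleGraph.Walk.cons h1 (SimpleGraph.Walk.cons h2 SimpleGraph.Walk.nil) := by
  cases p with
  | nil => simp at h
  | cons h1 q =>
    cases q with
    | nil => simp at h
    | cons h2 r =>
      cases r with
      | nil => exact ⟨_, h1, h2, rfl⟩
      | cons h3 s => simp [SimpleGraph.Walk.length_cons] at h

lemma dist_eq_two {a b c : V} (hab : a ≠ b) (hnadj : ¬G.Adj a b)
    (h1 : G.Adj a c) (h2 : G.Adj c b) : G.dist a b = 2 := by
  have hle := SimpleGraph.dist_le (SimpleGraph.Walk.cons h1 (SimpleGraph.Walk.cons h2 SimpleGraph.Walk.nil))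
  simp only [SimpleGraph.Walk.length_cons, SimpleGraph.Walk.length_nil] at hle
  have h0 : G.dist a b ≠ 0 := by
    rw [SimpleGraph.dist_ne_zero_iff_ne_and_reachable]
    exact ⟨hab, ⟨SimpleGraph.Walk.cons h1 (SimpleGraph.Walk.cons h2 SimpleGraph.Walk.nil)⟩⟩
  have h1' : G.dist a b ≠ 1 := fun h => hnadj (SimpleGraph.dist_eq_one_iff_adj.mp h)
  omega

lemma path2 {a b c : V} (hab : a ≠ b) (hac : a ≠ c) (hcb : c ≠ b)
    (h1 : G.Adj a c) (h2 : G.Adj c b) :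
    (SimpleGraph.Walk.cons h1 (SimpleGraph.Walk.cons h2 SimpleGraph.Walk.nil)).IsPath := by
  simp [SimpleGraph.Walk.isPath_def, hab, hac, hcb]

lemma path1 {a b : V} (h : G.Adj a b) :
    (SimpleGraph.Walk.cons h SimpleGraph.Walk.nil).IsPath := by
  simp [SimpleGraph.Walk.isPath_def, h.ne]

/-- shorthand for the join with `K₁`. -/
abbrev JG (G : SimpleGraph V) : SimpleGraph (V ⊕ Unit) := graphJoin G (⊥ : SimpleGraph Unit)

lemma Jadj_ll {a b : V} (h : G.Adj a b) : (JG G).Adj (inl a) (inl b) := h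
lemma Jadj_ll_iff {a b : V} : (JG G).Adj (inl a) (inl b) ↔ G.Adj a b := Iff.rfl
lemma Jadj_lr (a : V) (t : Unit) : (JG G).Adj (inl a) (inr t) := trivial
lemma Jadj_rl (t : Unit) (a : V) : (JG G).Adj (inr t) (inl a) := trivial

lemma J_dist_two {x y : V ⊕ Unit} (hxy : x ≠ y) (hnadj : ¬(JG G).Adj x y) :
    (JG G).dist x y = 2 := by
  match x, y with
  | inl a, inl b =>
    exact dist_eq_two hxy hnadj (Jadj_lr a ()) (Jadj_rl () b)
  | inl a, inr t => exact absurd (Jadj_lr _ _) hnadj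
  | inr t, inl a => exact absurd (Jadj_rl _ _) hnadj
  | inr s, inr t => exact absurd rfl hxy

/-- The trivial mutual-visibility witness for a pair of equal vertices. -/
lemma mv_refl {H : SimpleGraph V} (u : V) : ∃ p : H.Walk u u,
    p.IsPath ∧ p.length = H.dist u u ∧ ∀ x ∈ p.support, x ∈ (Set.univ : Set V) → x = u ∨ x = u := by
  refine ⟨SimpleGraph.Walk.nil, SimpleGraph.Walk.IsPath.nil, by simp [SimpleGraph.dist_self], by simp⟩

/-- Any subset of the `inl` copy of `V` is a mutual visibility set of the join. -/
lemma mv_inl_subset (T : Set V) : IsMutVisSet (JG G) (Sum.inl '' T) := by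
  rintro x ⟨a, ha, rfl⟩ y ⟨b, hb, rfl⟩
  by_cases hab : a = b
  · subst hab
    exact ⟨SimpleGraph.Walk.nil, SimpleGraph.Walk.IsPath.nil, by simp [SimpleGraph.dist_self], by simp⟩
  · by_cases hadj : G.Adj a b
    · refine ⟨SimpleGraph.Walk.cons (Jadj_ll hadj) SimpleGraph.Walk.nil,
        path1 _, ?_, ?_⟩
      · rw [SimpleGraph.dist_eq_one_iff_adj.mpr (Jadj_ll hadj)]; simp
      · intro x hx _
        simp only [SimpleGraph.Walk.support_cons, SimpleGraph.Walk.support_nil,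
          List.mem_cons, List.mem_singleton] at hx
        tauto
    · have hne : (inl a : V ⊕ Unit) ≠ inl b := by simpa using hab
      have hnadj : ¬(JG G).Adj (inl a) (inl b) := hadj
      refine ⟨SimpleGraph.Walk.cons (Jadj_lr a ())
        (SimpleGraph.Walk.cons (Jadj_rl () b) SimpleGraph.Walk.nil),
        path2 hne (by simp) (by simp) _ _, ?_, ?_⟩
      · rw [J_dist_two hne hnadj]; simp
      · intro x hx hxm
        simp only [SimpleGraph.Walk.support_cons, SimpleGraph.Walk.support_nil,
          List.mem_cons, List.mem_singleton] at hx
        rcases hx with rfl | rfl | rfl | h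
        · exact Or.inl rfl
        · rcases hxm with ⟨c, _, hc⟩; exact absurd hc (by simp)
        · exact Or.inr rfl
        · simp at h

end MVAux

namespace MVAux2
open Sum MVAux
variable {V : Type*} {G : SimpleGraph V}

lemma mv_base (hconn : G.Connected) {S : Set V} (hS : IsMutVisSet G S)
    (hd : ∀ u ∈ S, ∀ v ∈ S, G.dist u v ≤ 2) :
    IsMutVisSet (JG G) (Sum.inl '' S ∪ {Sum.inr ()}) := by
  set R : Set (V ⊕ Unit) := Sum.inl '' S ∪ {Sum.inr ()} with hRdef
  have key : ∀ a ∈ S, ∀ b ∈ S, ∃ p : (JG G).Walk (inl a) (inl b), p.IsPath ∧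
      p.length = (JG G).dist (inl a) (inl b) ∧ ∀ x ∈ p.support,
      x ∈ R → x = inl a ∨ x = inl b := by
    intro a ha b hb
    by_cases hab : a = b
    · subst hab
      exact ⟨SimpleGraph.Walk.nil, SimpleGraph.Walk.IsPath.nil,
        by simp [SimpleGraph.dist_self], by simp⟩
    · by_cases hadj : G.Adj a b
      · refine ⟨SimpleGraph.Walk.cons (Jadj_ll hadj) SimpleGraph.Walk.nil, path1 _, ?_, ?_⟩
        · rw [SimpleGraph.dist_eq_one_iff_adj.mpr (Jadj_ll hadj)]; simp
        · intro x hx _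
          simp only [SimpleGraph.Walk.support_cons, SimpleGraph.Walk.support_nil,
            List.mem_cons, List.mem_singleton] at hx
          tauto
      · -- dist_G a b = 2
        have hdist : G.dist a b = 2 := by
          have hle := hd a ha b hb
          have h0 : G.dist a b ≠ 0 := by
            rw [SimpleGraph.dist_ne_zero_iff_ne_and_reachable]
            exact ⟨hab, hconn.preconnected a b⟩
          have h1 : G.dist a b ≠ 1 := fun h => hadj (SimpleGraph.dist_eq_one_iff_adj.mp h)
          omega
        obtain ⟨p, hp, hlen, hsup⟩ := hS ha hb
        rw [hdist] at hlen
        obtain ⟨c, h1, h2, rfl⟩ := walk_len2 p hlen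
        have hcS : c ∉ S := by
          intro hc
          rcases hsup c (by simp) hc with rfl | rfl
          · exact G.loopless.irrefl _ h1
          · exact G.loopless.irrefl _ h2
        have hne : (inl a : V ⊕ Unit) ≠ inl b := by simpa using hab
        refine ⟨SimpleGraph.Walk.cons (Jadj_ll h1) (SimpleGraph.Walk.cons (Jadj_ll h2)
          SimpleGraph.Walk.nil), path2 hne (by simpa using h1.ne) (by simpa using h2.ne) _ _,
          ?_, ?_⟩
        · rw [J_dist_two hne (fun h => hadj h)]; simp
        · intro x hx hxR
          simp only [SimpleGraph.Walk.support_cons, SimpleGraph.Walk.support_nil,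
            List.mem_cons, List.mem_singleton] at hx
          rcases hx with rfl | rfl | rfl | h
          · exact Or.inl rfl
          · exfalso
            rcases hxR with ⟨d, hd', hdc⟩ | h'
            · rw [show d = c from by simpa using hdc] at hd'; exact hcS hd'
            · simp at h'
          · exact Or.inr rfl
          · simp at h
  rintro x hx y hy
  rcases hx with ⟨a, ha, rfl⟩ | hx
  · rcases hy with ⟨b, hb, rfl⟩ | hy
    · exact key a ha b hb
    · -- y = inr ()
      rcases hy with rfl
      refine ⟨SimpleGraph.Walk.cons (Jadj_lr a ()) SimpleGraph.Walk.nil, path1 _, ?_, ?_⟩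
      · rw [SimpleGraph.dist_eq_one_iff_adj.mpr (Jadj_lr a ())]; simp
      · intro x hx _
        simp only [SimpleGraph.Walk.support_cons, SimpleGraph.Walk.support_nil,
          List.mem_cons, List.mem_singleton] at hx
        tauto
  · rcases hx with rfl
    rcases hy with ⟨b, hb, rfl⟩ | hy
    · refine ⟨SimpleGraph.Walk.cons (Jadj_rl () b) SimpleGraph.Walk.nil, path1 _, ?_, ?_⟩
      · rw [SimpleGraph.dist_eq_one_iff_adj.mpr (Jadj_rl () b)]; simp
      · intro x hx _
        simp only [SimpleGraph.Walk.support_cons, SimpleGraph.Walk.support_nil,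
          List.mem_cons, List.mem_singleton] at hx
        tauto
    · rcases hy with rfl
      exact ⟨SimpleGraph.Walk.nil, SimpleGraph.Walk.IsPath.nil,
        by simp [SimpleGraph.dist_self], by simp⟩

lemma extract {R : Set (V ⊕ Unit)} (hR : IsMutVisSet (JG G) R) (hu : inr () ∈ R) :
    IsMutVisSet G {a | inl a ∈ R} ∧
      ∀ u ∈ {a | inl a ∈ R}, ∀ v ∈ {a | inl a ∈ R}, G.dist u v ≤ 2 := by
  set S : Set V := {a | inl a ∈ R} with hSdef
  have key : ∀ a ∈ S, ∀ b ∈ S, (∃ p : G.Walk a b, p.IsPath ∧ p.length = G.dist a b ∧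
      ∀ x ∈ p.support, x ∈ S → x = a ∨ x = b) ∧ G.dist a b ≤ 2 := by
    intro a ha b hb
    by_cases hab : a = b
    · subst hab
      exact ⟨⟨SimpleGraph.Walk.nil, SimpleGraph.Walk.IsPath.nil,
        by simp [SimpleGraph.dist_self], by simp⟩, by simp [SimpleGraph.dist_self]⟩
    · by_cases hadj : G.Adj a b
      · refine ⟨⟨SimpleGraph.Walk.cons hadj SimpleGraph.Walk.nil, path1 _, ?_, ?_⟩, ?_⟩
        · rw [SimpleGraph.dist_eq_one_iff_adj.mpr hadj]; simp
        · intro x hx _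
          simp only [SimpleGraph.Walk.support_cons, SimpleGraph.Walk.support_nil,
            List.mem_cons, List.mem_singleton] at hx
          tauto
        · rw [SimpleGraph.dist_eq_one_iff_adj.mpr hadj]; omega
      · have hne : (inl a : V ⊕ Unit) ≠ inl b := by simpa using hab
        have hnadj : ¬(JG G).Adj (inl a) (inl b) := hadj
        obtain ⟨p, hp, hlen, hsup⟩ := hR ha hb
        rw [J_dist_two hne hnadj] at hlen
        obtain ⟨z, h1, h2, rfl⟩ := walk_len2 p hlen
        have hznodup : z ≠ inl a ∧ z ≠ inl b := by
          rw [SimpleGraph.Walk.isPath_def] at hp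
          simp only [SimpleGraph.Walk.support_cons, SimpleGraph.Walk.support_nil] at hp
          have h := List.nodup_cons.mp hp
          constructor
          · intro hz; exact h.1 (by simp [hz])
          · intro hz; subst hz
            have := List.nodup_cons.mp h.2
            exact this.1 (by simp)
        have hzR : z ∉ R := by
          intro hz
          rcases hsup z (by simp) hz with h | h
          · exact hznodup.1 h
          · exact hznodup.2 h
        obtain ⟨c⟩ | ⟨t⟩ := z
        · have hc1 : G.Adj a c := h1
          have hc2 : G.Adj c b := h2
          have hcS : c ∉ S := hzR
          have hdist : G.dist a b = 2 := dist_eq_two hab hadj hc1 hc2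
          refine ⟨⟨SimpleGraph.Walk.cons hc1 (SimpleGraph.Walk.cons hc2 SimpleGraph.Walk.nil),
            path2 hab hc1.ne hc2.ne _ _, ?_, ?_⟩, by omega⟩
          · rw [hdist]; simp
          · intro x hx hxS
            simp only [SimpleGraph.Walk.support_cons, SimpleGraph.Walk.support_nil,
              List.mem_cons, List.mem_singleton] at hx
            rcases hx with rfl | rfl | rfl | h
            · exact Or.inl rfl
            · exact absurd hxS hcS
            · exact Or.inr rfl
            · simp at h
        · exact absurd hu (by rcases t with ⟨⟩; exact hzR)
  exact ⟨fun a ha b hb => (key a ha b hb).1, fun a ha b hb => (key a ha b hb).2⟩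

end MVAux2

namespace MVAux3
open Sum MVAux
variable {V : Type*} {n : ℕ} {S : Set V}

noncomputable def confF (e : ↥S ≃ Fin n) : Fin (n + 1) ↪ V ⊕ Unit where
  toFun i := if h : (i : ℕ) < n then Sum.inl ((e.symm ⟨i, h⟩ : ↥S) : V) else Sum.inr ()
  inj' := by
    intro i j hij
    by_cases hi : (i : ℕ) < n <;> by_cases hj : (j : ℕ) < n <;>
      simp only [dif_pos, dif_neg, hi, hj, dite_true, dite_false] at hij
    · have h : (⟨(i : ℕ), hi⟩ : Fin n) = ⟨(j : ℕ), hj⟩ :=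
        e.symm.injective (Subtype.coe_injective (by simpa using hij))
      exact Fin.ext (by simpa [Fin.mk.injEq] using h)
    · simp at hij
    · simp at hij
    · exact Fin.ext (by omega)

noncomputable def confG (e : ↥S ≃ Fin n) (w : V) (_hw : w ∉ S) : Fin (n + 1) ↪ V ⊕ Unit where
  toFun i := if h : (i : ℕ) < n then Sum.inl ((e.symm ⟨i, h⟩ : ↥S) : V) else Sum.inl w
  inj' := by
    intro i j hij
    by_cases hi : (i : ℕ) < n <;> by_cases hj : (j : ℕ) < n <;>
      simp only [dif_pos, dif_neg, hi, hj, dite_true, dite_false] at hij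
    · have h : (⟨(i : ℕ), hi⟩ : Fin n) = ⟨(j : ℕ), hj⟩ :=
        e.symm.injective (Subtype.coe_injective (by simpa using hij))
      exact Fin.ext (by simpa [Fin.mk.injEq] using h)
    · exact absurd (by simpa using hij : ((e.symm ⟨i, hi⟩ : ↥S) : V) = w)
        (fun h => _hw (h ▸ (e.symm ⟨i, hi⟩).2))
    · exact absurd (by simpa using hij.symm : ((e.symm ⟨j, hj⟩ : ↥S) : V) = w)
        (fun h => _hw (h ▸ (e.symm ⟨j, hj⟩).2))
    · exact Fin.ext (by omega)

lemma confF_last (e : ↥S ≃ Fin n) : confF e (Fin.last n) = Sum.inr () := by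
  simp only [confF]; exact dif_neg (by simp [Fin.last])

lemma confG_last (e : ↥S ≃ Fin n) (w : V) (hw : w ∉ S) :
    confG e w hw (Fin.last n) = Sum.inl w := by
  simp only [confG]; exact dif_neg (by simp [Fin.last])

lemma confG_eq_confF (e : ↥S ≃ Fin n) (w : V) (hw : w ∉ S) (j : Fin (n + 1))
    (hj : j ≠ Fin.last n) : confG e w hw j = confF e j := by
  have h : (j : ℕ) < n := by
    have := j.isLt
    have : (j : ℕ) ≠ n := fun h => hj (Fin.ext h)
    omega
  show (if h' : (j : ℕ) < n then Sum.inl ((e.symm ⟨j, h'⟩ : ↥S) : V) else Sum.inl w) =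
    (if h' : (j : ℕ) < n then Sum.inl ((e.symm ⟨j, h'⟩ : ↥S) : V) else Sum.inr ())
  rw [dif_pos h, dif_pos h]

lemma range_confF (e : ↥S ≃ Fin n) :
    Set.range ⇑(confF e) = Sum.inl '' S ∪ {Sum.inr ()} := by
  ext x
  constructor
  · rintro ⟨i, rfl⟩
    by_cases h : (i : ℕ) < n
    · exact Or.inl ⟨_, (e.symm ⟨i, h⟩).2, by symm; exact dif_pos h⟩
    · right; exact dif_neg h
  · rintro (⟨a, ha, rfl⟩ | rfl)
    · refine ⟨(e ⟨a, ha⟩).castSucc, ?_⟩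
      have h : ((e ⟨a, ha⟩).castSucc : ℕ) < n := (e ⟨a, ha⟩).isLt
      have h2 : (⟨((e ⟨a, ha⟩).castSucc : ℕ), h⟩ : Fin n) = e ⟨a, ha⟩ := Fin.ext rfl
      show (if h' : ((e ⟨a, ha⟩).castSucc : ℕ) < n then
          Sum.inl ((e.symm ⟨_, h'⟩ : ↥S) : V) else Sum.inr ()) = Sum.inl a
      rw [dif_pos h]
      rw [h2, Equiv.symm_apply_apply]
    · exact ⟨Fin.last n, confF_last e⟩

lemma range_confG (e : ↥S ≃ Fin n) (w : V) (hw : w ∉ S) :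
    Set.range ⇑(confG e w hw) = Sum.inl '' (insert w S) := by
  ext x
  constructor
  · rintro ⟨i, rfl⟩
    by_cases h : (i : ℕ) < n
    · exact ⟨_, Or.inr (e.symm ⟨i, h⟩).2, by symm; exact dif_pos h⟩
    · exact ⟨w, Or.inl rfl, by symm; exact dif_neg h⟩
  · rintro ⟨a, (rfl | ha), rfl⟩
    · exact ⟨Fin.last n, confG_last e a hw⟩
    · refine ⟨(e ⟨a, ha⟩).castSucc, ?_⟩
      have h : ((e ⟨a, ha⟩).castSucc : ℕ) < n := (e ⟨a, ha⟩).isLt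
      have h2 : (⟨((e ⟨a, ha⟩).castSucc : ℕ), h⟩ : Fin n) = e ⟨a, ha⟩ := Fin.ext rfl
      show (if h' : ((e ⟨a, ha⟩).castSucc : ℕ) < n then
          Sum.inl ((e.symm ⟨_, h'⟩ : ↥S) : V) else Sum.inl w) = Sum.inl a
      rw [dif_pos h]
      rw [h2, Equiv.symm_apply_apply]

end MVAux3

namespace MVAux3
open Sum MVAux MVAux2

lemma tour {V : Type*} [Fintype V] {G : SimpleGraph V} (hconn : G.Connected) {n : ℕ}
    {S : Set V} (e : ↥S ≃ Fin n) (hSmv : IsMutVisSet G S)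
    (hSd : ∀ u ∈ S, ∀ v ∈ S, G.dist u v ≤ 2) :
    IsMobileConfig (JG G) (IsMutVisSet (JG G)) (confF e) := by
  classical
  constructor
  · rw [range_confF]; exact mv_base hconn hSmv hSd
  · obtain ⟨l, hlmem, hlall⟩ : ∃ l : List V, (∀ w ∈ l, w ∉ S) ∧ (∀ w, w ∉ S → w ∈ l) := by
      refine ⟨(Finset.univ.filter (fun x => x ∉ S)).toList, ?_, ?_⟩
      · intro w hw
        simpa using (Finset.mem_filter.mp (Finset.mem_toList.mp hw)).2
      · intro w hw
        rw [Finset.mem_toList]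
        simp [hw]
    let c : ℕ → (Fin (n + 1) ↪ V ⊕ Unit) := fun k =>
      if h : k % 2 = 1 ∧ k / 2 < l.length then
        confG e (l.get ⟨k / 2, h.2⟩) (hlmem _ (List.get_mem _ _)) else confF e
    have hceven : ∀ k, k % 2 = 0 → c k = confF e := fun k h => dif_neg (by omega)
    have hcodd : ∀ k (h1 : k % 2 = 1) (h2 : k / 2 < l.length),
        c k = confG e (l.get ⟨k / 2, h2⟩) (hlmem _ (List.get_mem _ _)) :=
      fun k h1 h2 => dif_pos ⟨h1, h2⟩
    refine ⟨2 * l.length, c, hceven 0 rfl, ?_, ?_⟩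
    · intro k hk
      by_cases hpar : k % 2 = 1
      · have h2 : k / 2 < l.length := by omega
        rw [hcodd k hpar h2, hceven (k + 1) (by omega)]
        refine ⟨Fin.last n, ?_, ?_, ?_, ?_⟩
        · rw [confG_last, confF_last]; exact Jadj_lr _ ()
        · rw [confF_last, range_confG]
          rintro ⟨a, -, hEq⟩
          simp at hEq
        · intro j hj
          exact (confG_eq_confF e _ _ j hj).symm
        · rw [range_confF]; exact mv_base hconn hSmv hSd
      · have hpar0 : k % 2 = 0 := by omega
        have h2 : (k + 1) / 2 < l.length := by omega
        rw [hceven k hpar0, hcodd (k + 1) (by omega) h2]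
        refine ⟨Fin.last n, ?_, ?_, ?_, ?_⟩
        · rw [confF_last, confG_last]; exact Jadj_rl () _
        · rw [confG_last, range_confF]
          rintro (⟨a, ha, hEq⟩ | hEq)
          · exact hlmem _ (List.get_mem _ _)
              (by rwa [show a = l.get ⟨(k + 1) / 2, h2⟩ from by simpa using hEq] at ha)
          · simp at hEq
        · intro j hj
          exact confG_eq_confF e _ _ j hj
        · rw [range_confG]; exact mv_inl_subset _
    · intro v
      match v with
      | Sum.inr () =>
        exact ⟨0, by omega, Fin.last n, by rw [hceven 0 rfl, confF_last]⟩
      | Sum.inl w =>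
        by_cases hw : w ∈ S
        · refine ⟨0, by omega, ?_⟩
          have hmem : Sum.inl w ∈ Set.range ⇑(confF e) := by
            rw [range_confF]; exact Or.inl ⟨w, hw, rfl⟩
          obtain ⟨i, hi⟩ := hmem
          exact ⟨i, by rw [hceven 0 rfl]; exact hi⟩
        · obtain ⟨⟨j, hj⟩, hget⟩ := List.mem_iff_get.mp (hlall w hw)
          have h2 : (2 * j + 1) / 2 < l.length := by omega
          refine ⟨2 * j + 1, by omega, Fin.last n, ?_⟩
          rw [hcodd (2 * j + 1) (by omega) h2, confG_last]
          have hidx : (⟨(2 * j + 1) / 2, h2⟩ : Fin l.length) = ⟨j, hj⟩ := Fin.ext (show (2 * j + 1) / 2 = j by omega)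
          rw [hidx, hget]

end MVAux3


theorem stmt_6 {V : Type*} [Fintype V] (G : SimpleGraph V) (hconn : G.Connected) :
    mobMV (graphJoin G (⊥ : SimpleGraph Unit)) = muMV2 G + 1 := by
  classical
  unfold mobMV muMV2
  set B := {n : ℕ | ∃ S : Set V, IsMutVisSet G S ∧ (∀ u ∈ S, ∀ v ∈ S, G.dist u v ≤ 2) ∧
    S.ncard = n} with hBdef
  set A := {t : ℕ | ∃ f : Fin t ↪ V ⊕ Unit,
    IsMobileConfig (graphJoin G (⊥ : SimpleGraph Unit))
      (IsMutVisSet (graphJoin G (⊥ : SimpleGraph Unit))) f} with hAdef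
  have hB0 : (0 : ℕ) ∈ B := by
    refine ⟨∅, ?_, ?_, by simp⟩
    · intro u hu
      exact absurd hu (Set.notMem_empty u)
    · intro u hu
      exact absurd hu (Set.notMem_empty u)
  have hBbdd : BddAbove B := by
    refine ⟨(Set.univ : Set V).ncard, ?_⟩
    rintro m ⟨S, -, -, rfl⟩
    exact Set.ncard_le_ncard (Set.subset_univ S) Set.finite_univ
  have hAbdd : BddAbove A := by
    refine ⟨Fintype.card (V ⊕ Unit), ?_⟩
    rintro t ⟨f, -⟩
    simpa using Fintype.card_le_of_embedding f
  apply le_antisymm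
  · -- upper bound
    apply csSup_le'
    rintro t ⟨f, hP, N, c, hc0, hmov, hvis⟩
    have hPall : ∀ k, k ≤ N →
        IsMutVisSet (graphJoin G (⊥ : SimpleGraph Unit)) (Set.range ⇑(c k)) := by
      intro k
      induction k with
      | zero => intro _; rw [hc0]; exact hP
      | succ k ih =>
        intro hk
        obtain ⟨i, -, -, -, hP'⟩ := hmov k (by omega)
        exact hP'
    obtain ⟨k, hk, i, hki⟩ := hvis (Sum.inr ())
    have hu : Sum.inr () ∈ Set.range ⇑(c k) := ⟨i, hki⟩
    obtain ⟨hSmv, hSd⟩ := MVAux2.extract (hPall k hk) hu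
    have hmemB : {a : V | Sum.inl a ∈ Set.range ⇑(c k)}.ncard ∈ B :=
      ⟨_, hSmv, hSd, rfl⟩
    have hle := le_csSup hBbdd hmemB
    have himg : Sum.inl '' {a : V | Sum.inl a ∈ Set.range ⇑(c k)} =
        Set.range ⇑(c k) \ {Sum.inr ()} := by
      ext x
      constructor
      · rintro ⟨a, ha, rfl⟩
        exact ⟨ha, by simp⟩
      · rintro ⟨hx, hx2⟩
        match x with
        | Sum.inl a => exact ⟨a, hx, rfl⟩
        | Sum.inr () => exact absurd rfl hx2
    have h1 : (Set.range ⇑(c k)).ncard = t := by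
      rw [← Set.image_univ, Set.ncard_image_of_injective _ (c k).injective,
        Set.ncard_univ, Nat.card_eq_fintype_card, Fintype.card_fin]
    have h2 := Set.ncard_diff_singleton_add_one hu (Set.toFinite _)
    rw [← himg, Set.ncard_image_of_injective _ Sum.inl_injective] at h2
    omega
  · -- lower bound
    obtain ⟨S, hSmv, hSd, hScard⟩ := Nat.sSup_mem ⟨0, hB0⟩ hBbdd
    haveI : Fintype ↥S := Set.Finite.fintype (Set.toFinite S)
    have hcardS : Fintype.card ↥S = sSup B := by
      rw [← hScard, Set.ncard_eq_toFinset_card', Set.toFinset_card]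
    let e : ↥S ≃ Fin (sSup B) := Fintype.equivFinOfCardEq hcardS
    have hmemA : sSup B + 1 ∈ A :=
      ⟨MVAux3.confF e, MVAux3.tour hconn e hSmv hSd⟩
    exact le_csSup hAbdd hmemA
end
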